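/- arXiv:2103.13427 — 3 statements merged into one kernel-verified Lean document; each statement's English description precedes it below -/
import Mathlib

section
/- For the max constraint loss CLoss = Σ_A CLoss_A where CLoss_A = -y_A · ln(max_{B ∈ D_A}(y_B · h_B)) - (1 - y_A) · ln(1 - max_{B ∈ D_A} h_B), with ground truth y ∈ {0,1} consistent with the hierarchy (y_B = 1 and B ∈ D_A implies y_A = 1): for each class A, if y_A = 1 then ∂CLoss/∂h_A ≤ 0, and if y_A = 0 then ∂CLoss/∂h_A ≥ 0. -/
open Real Set Filter Topology

private lemma deriv_nonneg_of_monotoneOn {f : ℝ → ℝ} {a b x d : ℝ}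
    (hx : x ∈ Set.Ioo a b) (hm : MonotoneOn f (Set.Ioo a b))
    (hd : HasDerivAt f d x) : 0 ≤ d := by
  have h1 : Tendsto (slope f x) (𝓝[>] x) (𝓝 d) :=
    (hasDerivAt_iff_tendsto_slope.1 hd).mono_left
      (nhdsWithin_mono x (fun t ht => ne_of_gt ht))
  refine ge_of_tendsto h1 ?_
  have hmem : Set.Ioo x b ∈ 𝓝[>] x := Ioo_mem_nhdsGT_of_mem ⟨le_refl x, hx.2⟩
  filter_upwards [hmem] with t ht
  have hfx : f x ≤ f t := hm hx ⟨hx.1.trans ht.1, ht.2⟩ ht.1.le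
  have : (0:ℝ) ≤ (f t - f x) / (t - x) :=
    div_nonneg (by linarith) (by linarith [ht.1])
  simpa [slope_def_field, div_eq_inv_mul] using this

private lemma deriv_nonpos_of_antitoneOn {f : ℝ → ℝ} {a b x d : ℝ}
    (hx : x ∈ Set.Ioo a b) (hm : AntitoneOn f (Set.Ioo a b))
    (hd : HasDerivAt f d x) : d ≤ 0 := by
  have : (0:ℝ) ≤ -d :=
    deriv_nonneg_of_monotoneOn hx (fun s hs t ht hst => neg_le_neg (hm hs ht hst)) hd.neg
  linarith

/-- For the max constraint loss
`CLoss g = Σ_A (-y_A ln(max_{B ∈ D_A} y_B g_B) - (1-y_A) ln(1 - max_{B ∈ D_A} g_B))`,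
with ground truth `y ∈ {0,1}` consistent with the hierarchy, at any point of
differentiability the partial derivative w.r.t. `h_A` is ≤ 0 if `y_A = 1`
and ≥ 0 if `y_A = 0`. -/
theorem closs_gradient_sign
    {C : Type*} [Fintype C] [DecidableEq C]
    (D : C → Finset C) (hmem : ∀ A, A ∈ D A)
    (y : C → ℝ) (hy : ∀ A, y A = 0 ∨ y A = 1)
    (hcons : ∀ A B, B ∈ D A → y B = 1 → y A = 1)
    (h : C → ℝ) (hh : ∀ A, h A ∈ Set.Ioo (0 : ℝ) 1)
    (CLoss : (C → ℝ) → ℝ)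
    (hCL : ∀ g : C → ℝ, CLoss g =
      ∑ A : C, (-(y A) * Real.log ((D A).sup' ⟨A, hmem A⟩ (fun B => y B * g B))
        - (1 - y A) * Real.log (1 - (D A).sup' ⟨A, hmem A⟩ g)))
    (A : C) (d : ℝ)
    (hd : HasDerivAt (fun t => CLoss (Function.update h A t)) d (h A)) :
    (y A = 1 → d ≤ 0) ∧ (y A = 0 → 0 ≤ d) := by
  have hhA := hh A
  -- pointwise monotonicity of update in t
  have hupd_le : ∀ (s t : ℝ), s ≤ t → ∀ B, Function.update h A s B ≤ Function.update h A t B := by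
    intro s t hst B
    by_cases hBA : B = A
    · subst hBA; simp [hst]
    · simp [Function.update_of_ne hBA]
  have hupd_lt1 : ∀ (t : ℝ), t < 1 → ∀ B, Function.update h A t B < 1 := by
    intro t ht B
    by_cases hBA : B = A
    · subst hBA; simpa using ht
    · simpa [Function.update_of_ne hBA] using (hh B).2
  constructor
  · -- y A = 1 : antitone case
    intro hA1
    refine deriv_nonpos_of_antitoneOn hhA ?_ hd
    intro s hs t ht hst
    simp only [hCL]
    apply Finset.sum_le_sum
    intro A' _
    by_cases hAin : A ∈ D A'
    · have hyA' : y A' = 1 := hcons A' A hAin hA1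
      have hsup_le : (D A').sup' ⟨A', hmem A'⟩ (fun B => y B * Function.update h A s B)
          ≤ (D A').sup' ⟨A', hmem A'⟩ (fun B => y B * Function.update h A t B) := by
        apply Finset.sup'_mono_fun
        intro B _
        rcases hy B with h0 | h1
        · simp [h0]
        · rw [h1]; simpa using hupd_le s t hst B
      have hsup_pos : 0 < (D A').sup' ⟨A', hmem A'⟩ (fun B => y B * Function.update h A s B) := by
        have : y A * Function.update h A s A
            ≤ (D A').sup' ⟨A', hmem A'⟩ (fun B => y B * Function.update h A s B) :=
          Finset.le_sup' (fun B => y B * Function.update h A s B) hAin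
        have h2 : y A * Function.update h A s A = s := by simp [hA1]
        rw [h2] at this
        exact lt_of_lt_of_le hs.1 this
      have hlog := Real.log_le_log hsup_pos hsup_le
      rw [hyA']
      nlinarith [hlog]
    · -- A ∉ D A' : term unchanged
      have e1 : ∀ (u : ℝ), (D A').sup' ⟨A', hmem A'⟩ (fun B => y B * Function.update h A u B)
          = (D A').sup' ⟨A', hmem A'⟩ (fun B => y B * h B) := by
        intro u
        apply Finset.sup'_congr _ rfl
        intro B hB
        have : B ≠ A := fun hBA => hAin (hBA ▸ hB)
        simp [Function.update_of_ne this]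
      have e2 : ∀ (u : ℝ), (D A').sup' ⟨A', hmem A'⟩ (Function.update h A u)
          = (D A').sup' ⟨A', hmem A'⟩ h := by
        intro u
        apply Finset.sup'_congr _ rfl
        intro B hB
        have : B ≠ A := fun hBA => hAin (hBA ▸ hB)
        simp [Function.update_of_ne this]
      rw [e1 s, e1 t, e2 s, e2 t]
  · -- y A = 0 : monotone case
    intro hA0
    refine deriv_nonneg_of_monotoneOn hhA ?_ hd
    intro s hs t ht hst
    simp only [hCL]
    apply Finset.sum_le_sum
    intro A' _
    -- first sup is independent of t since y A = 0
    have e1 : (D A').sup' ⟨A', hmem A'⟩ (fun B => y B * Function.update h A s B)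
        = (D A').sup' ⟨A', hmem A'⟩ (fun B => y B * Function.update h A t B) := by
      apply Finset.sup'_congr _ rfl
      intro B hB
      by_cases hBA : B = A
      · subst hBA; simp [hA0]
      · simp [Function.update_of_ne hBA]
    have hsup_le : (D A').sup' ⟨A', hmem A'⟩ (Function.update h A s)
        ≤ (D A').sup' ⟨A', hmem A'⟩ (Function.update h A t) :=
      Finset.sup'_mono_fun (fun B _ => hupd_le s t hst B)
    have hsup_lt1 : (D A').sup' ⟨A', hmem A'⟩ (Function.update h A t) < 1 :=
      (Finset.sup'_lt_iff ⟨A', hmem A'⟩).2 (fun B _ => hupd_lt1 t ht.2 B)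
    have hlog := Real.log_le_log (by linarith) (by linarith : 1 - (D A').sup' ⟨A', hmem A'⟩ (Function.update h A t) ≤ 1 - (D A').sup' ⟨A', hmem A'⟩ (Function.update h A s))
    have hyA' : 0 ≤ 1 - y A' := by rcases hy A' with h' | h' <;> rw [h'] <;> norm_num
    rw [e1]
    nlinarith [hlog]
end

section
/- Consider classes A, A₁, A₂ with constraints A₁ → A, A₂ → A, and A,¬A₁ → A₂, threshold θ = 1/2, negation v̄ = 1-v. Given h_A, h_{A₁}, h_{A₂} ∈ [0,1], define CM_{A₁} = h_{A₁}, CM_A = max(h_A, h_{A₁}, h_{A₂}), and CM_{A₂} = max(h_{A₂}, min(h_A, 1-h_{A₁}), min(h_{A₁}, 1-h_{A₁})). Then (i) CM_{A₁} ≤ CM_A, (ii) CM_{A₂} ≤ CM_A, and (iii) min(CM_A, 1-CM_{A₁}) ≤ CM_{A₂}; i.e., CM commits no constraint violations. -/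
/-- For classes `A, A₁, A₂` with constraints `A₁ → A`, `A₂ → A`
and `A, ¬A₁ → A₂`, the constraint module outputs commit no constraint
violations. -/
theorem cm_basic_case_no_constraint_violation
    (hA hA1 hA2 CMA CMA1 CMA2 : ℝ)
    (hbA : hA ∈ Set.Icc (0:ℝ) 1) (hbA1 : hA1 ∈ Set.Icc (0:ℝ) 1)
    (hbA2 : hA2 ∈ Set.Icc (0:ℝ) 1)
    (e1 : CMA1 = hA1)
    (e2 : CMA = max hA (max hA1 hA2))
    (e3 : CMA2 = max hA2 (max (min hA (1 - hA1)) (min hA1 (1 - hA1)))) :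
    CMA1 ≤ CMA ∧ CMA2 ≤ CMA ∧ min CMA (1 - CMA1) ≤ CMA2 := by
  subst e1 e2 e3
  obtain ⟨h0, h1⟩ := hbA
  obtain ⟨h2, h3⟩ := hbA1
  obtain ⟨h4, h5⟩ := hbA2
  refine ⟨?_, ?_, ?_⟩
  · exact le_max_of_le_right (le_max_left _ _)
  · refine max_le (le_max_of_le_right (le_max_right _ _)) (max_le ?_ ?_)
    · exact le_trans (min_le_left _ _) (le_max_left _ _)
    · exact le_trans (min_le_left _ _) (le_max_of_le_right (le_max_left _ _))
  · rw [min_max_distrib_right, min_max_distrib_right]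
    refine max_le (le_max_of_le_right (le_max_left _ _))
      (max_le (le_max_of_le_right (le_max_right _ _)) ?_)
    exact le_max_of_le_left (min_le_left _ _)
end

section
/- Let Π be a stratified finite set of normal rules with stratification Π₁,…,Π_s, and let H be a set of classes (facts). Define M₀ = H and M_{i+1} = the smallest superset of Mᵢ closed under the reduct of Π_{i+1} relative to Mᵢ. Then M_s is a stable model of Π ∪ { → A : A ∈ H }: M_s equals the smallest set closed under the reduct Π^{M_s} together with the facts H. -/
/-- A normal rule `A₁,…,A_k, ¬A_{k+1},…,¬A_n → A`. -/
structure Rule (C : Type*) where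
  pos : Finset C
  neg : Finset C
  head : C

/-- The reduct of `Π` relative to `M`: drop rules whose negative body meets
`M`, and keep the positive body and head of the remaining rules. -/
def Reduct {C : Type*} (Pi : Finset (Rule C)) (M : Set C) : Set (Finset C × C) :=
  {p | ∃ r ∈ Pi, (∀ A ∈ r.neg, A ∉ M) ∧ p = (r.pos, r.head)}

/-- A set of classes is closed under a set of definite rules. -/
def ClosedDef {C : Type*} (R : Set (Finset C × C)) (S : Set C) : Prop :=
  ∀ p ∈ R, (↑p.1 : Set C) ⊆ S → p.2 ∈ S

/-- The smallest superset of `H` closed under the definite rules `R`. -/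
def Cl {C : Type*} (R : Set (Finset C × C)) (H : Set C) : Set C :=
  ⋂₀ {S : Set C | H ⊆ S ∧ ClosedDef R S}

/-- A level assignment is a stratification. -/
def IsStratification {C : Type*} (Pi : Finset (Rule C)) (lvl : Rule C → ℕ) : Prop :=
  ∀ r ∈ Pi,
    (∀ B ∈ r.pos, ∀ r' ∈ Pi, r'.head = B → lvl r' ≤ lvl r) ∧
    (∀ B ∈ r.neg, ∀ r' ∈ Pi, r'.head = B → lvl r' < lvl r)

lemma subset_Cl {C : Type*} (R : Set (Finset C × C)) (H : Set C) : H ⊆ Cl R H := by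
  intro x hx
  exact Set.mem_sInter.mpr (fun S hS => hS.1 hx)

lemma Cl_closed {C : Type*} (R : Set (Finset C × C)) (H : Set C) : ClosedDef R (Cl R H) := by
  intro p hp hpos
  refine Set.mem_sInter.mpr (fun S hS => ?_)
  exact hS.2 p hp (fun a ha => Set.mem_sInter.mp (hpos ha) S hS)

lemma Cl_min {C : Type*} {R : Set (Finset C × C)} {H S : Set C}
    (h1 : H ⊆ S) (h2 : ClosedDef R S) : Cl R H ⊆ S :=
  fun _ hx => Set.mem_sInter.mp hx S ⟨h1, h2⟩

/-- Iterating the least closure of the reducts stratum by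
stratum, starting from the facts `H`, yields a stable model of
`Π ∪ { → A : A ∈ H }`. -/
theorem stratified_iteration_is_stable_model
    {C : Type*} [DecidableEq (Rule C)]
    (Pi : Finset (Rule C)) (s : ℕ) (lvl : Rule C → ℕ)
    (hlvl : IsStratification Pi lvl)
    (hrange : ∀ r ∈ Pi, 1 ≤ lvl r ∧ lvl r ≤ s)
    (H : Set C)
    (M : ℕ → Set C)
    (hM0 : M 0 = H)
    (hMsucc : ∀ i : ℕ,
      M (i + 1) = Cl (Reduct (Pi.filter (fun r => lvl r = i + 1)) (M i)) (M i)) :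
    M s = Cl (Reduct Pi (M s)) H := by
  -- monotonicity
  have mono1 : ∀ i, M i ⊆ M (i + 1) := by
    intro i
    rw [hMsucc i]
    exact subset_Cl _ _
  have mono : ∀ {i j : ℕ}, i ≤ j → M i ⊆ M j := by
    intro i j hij
    induction hij with
    | refl => exact subset_rfl
    | step _ ih => exact ih.trans (mono1 _)
  -- key lemma: anything in M j is in M k or is the head of a rule of level > k
  have key : ∀ j k : ℕ, M j ⊆ M k ∪ {A | ∃ r ∈ Pi, k < lvl r ∧ r.head = A} := by
    intro j
    induction j with
    | zero => intro k x hx; exact Or.inl (mono (Nat.zero_le k) hx)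
    | succ j ih =>
      intro k
      by_cases h : j + 1 ≤ k
      · exact fun x hx => Or.inl (mono h hx)
      · rw [hMsucc j]
        apply Cl_min (ih k)
        intro p hp _
        obtain ⟨r, hr, hneg, hpr⟩ := hp
        have hf := Finset.mem_filter.mp hr
        right
        refine ⟨r, hf.1, by omega, ?_⟩
        rw [hpr]
  apply Set.Subset.antisymm
  · -- M s ⊆ Cl (Reduct Pi (M s)) H ; prove ∀ j ≤ s, M j ⊆ Cl ...
    have main : ∀ j : ℕ, j ≤ s → M j ⊆ Cl (Reduct Pi (M s)) H := by
      intro j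
      induction j with
      | zero => intro _; rw [hM0]; exact subset_Cl _ _
      | succ j ih =>
        intro hjs
        rw [hMsucc j]
        apply Cl_min (ih (by omega))
        intro p hp hpos
        obtain ⟨r, hr, hneg, hpr⟩ := hp
        have hf := Finset.mem_filter.mp hr
        have hnegs : ∀ A ∈ r.neg, A ∉ M s := by
          intro A hA hAs
          rcases key s j hAs with h | ⟨r', hr', hlt, hhd⟩
          · exact hneg A hA h
          · have := (hlvl r hf.1).2 A hA r' hr' hhd
            omega
        exact Cl_closed _ _ p ⟨r, hf.1, hnegs, hpr⟩ hpos
    exact main s le_rfl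
  · -- Cl (Reduct Pi (M s)) H ⊆ M s
    apply Cl_min
    · rw [← hM0]; exact mono (Nat.zero_le s)
    · intro p hp hpos
      obtain ⟨r, hr, hneg, rfl⟩ := hp
      obtain ⟨h1, h2⟩ := hrange r hr
      -- positive body is in M (lvl r)
      have hposlvl : (↑r.pos : Set C) ⊆ M (lvl r) := by
        intro B hB
        rcases key s (lvl r) (hpos hB) with h | ⟨r', hr', hlt, hhd⟩
        · exact h
        · have := (hlvl r hr).1 B hB r' hr' hhd
          omega
      have hnegi : ∀ A ∈ r.neg, A ∉ M (lvl r - 1) := by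
        intro A hA hAm
        exact hneg A hA (mono (by omega) hAm)
      have hstep : M ((lvl r - 1) + 1) =
          Cl (Reduct (Pi.filter (fun r' => lvl r' = (lvl r - 1) + 1)) (M (lvl r - 1)))
            (M (lvl r - 1)) := hMsucc (lvl r - 1)
      have heq : (lvl r - 1) + 1 = lvl r := by omega
      rw [heq] at hstep
      have hmem : ((r.pos, r.head) : Finset C × C) ∈
          Reduct (Pi.filter (fun r' => lvl r' = (lvl r - 1) + 1)) (M (lvl r - 1)) := by
        exact ⟨r, Finset.mem_filter.mpr ⟨hr, by omega⟩, hnegi, rfl⟩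
      rw [heq] at hmem
      rw [hstep] at hposlvl
      have : r.head ∈ M (lvl r) := by
        rw [hstep]
        exact Cl_closed _ _ _ hmem hposlvl
      exact mono h2 this
end
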